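/- For any weak composition a, lswap(a) = { b : sort(b) = sort(a) and w(b) ≤ w(a) }, where lswap(a) is the set of weak compositions obtainable from a by sequences of left swaps, sort(a) is the weakly decreasing rearrangement, w(a) is the minimal-length permutation sorting a, and ≤ is strong Bruhat order. -/

import Mathlib

def dsortList {n : ℕ} (a : Fin n → ℕ) : List ℕ :=
  (Multiset.sort (↑(List.ofFn a)) (· ≤ ·)).reverse

def dsort {n : ℕ} (a : Fin n → ℕ) : Fin n → ℕ := fun i => (dsortList a).getD i.1 0

def plen {n : ℕ} (σ : Equiv.Perm (Fin n)) : ℕ :=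
  (Finset.univ.filter fun p : Fin n × Fin n => p.1 < p.2 ∧ σ p.2 < σ p.1).card

def IsMinSorter {n : ℕ} (a : Fin n → ℕ) (σ : Equiv.Perm (Fin n)) : Prop :=
  (∀ i, a i = dsort a (σ i)) ∧
    ∀ τ : Equiv.Perm (Fin n), (∀ i, a i = dsort a (τ i)) → plen σ ≤ plen τ

def BruhatStep {n : ℕ} (u v : Equiv.Perm (Fin n)) : Prop :=
  ∃ i j : Fin n, i ≠ j ∧ v = u * Equiv.swap i j ∧ plen u < plen v

def Bruhat {n : ℕ} (u v : Equiv.Perm (Fin n)) : Prop :=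
  Relation.ReflTransGen BruhatStep u v

def LSwapStepF {n : ℕ} (a b : Fin n → ℕ) : Prop :=
  ∃ i j : Fin n, i < j ∧ a i ≤ a j ∧ b = a ∘ (Equiv.swap i j)

namespace Stmt9

open Finset

variable {n : ℕ}

/-- sort key: decreasing in value, increasing in index (stable). -/
def key (a : Fin n → ℕ) (i : Fin n) : Lex (ℕᵒᵈ × ℕ) := toLex (OrderDual.toDual (a i), (i : ℕ))

/-- The canonical (unique minimal-length) sorter. -/
def std (a : Fin n → ℕ) : Equiv.Perm (Fin n) := (Tuple.sort (key a))⁻¹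

def Inv (σ : Equiv.Perm (Fin n)) : Finset (Fin n × Fin n) :=
  Finset.univ.filter fun p => p.1 < p.2 ∧ σ p.2 < σ p.1

def Pa (a : Fin n → ℕ) : Finset (Fin n × Fin n) :=
  Finset.univ.filter fun p => p.1 < p.2 ∧ a p.1 < a p.2

lemma plen_eq (σ : Equiv.Perm (Fin n)) : plen σ = (Inv σ).card := rfl

lemma key_injective (a : Fin n → ℕ) : Function.Injective (key a) := by
  intro x y h
  have := congrArg (fun p => (ofLex p).2) h
  exact Fin.val_injective this

lemma key_lt_iff (a : Fin n → ℕ) {x y : Fin n} :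
    key a x < key a y ↔ a y < a x ∨ (a x = a y ∧ x < y) := by
  rw [key, key, Prod.Lex.lt_iff]
  constructor
  · rintro (h | ⟨h1, h2⟩)
    · exact Or.inl h
    · exact Or.inr ⟨(OrderDual.toDual_inj.mp h1).symm ▸ rfl, h2⟩
  · rintro (h | ⟨h1, h2⟩)
    · exact Or.inl h
    · exact Or.inr ⟨by rw [h1]; rfl, h2⟩

lemma key_le_imp (a : Fin n → ℕ) {x y : Fin n} (h : key a x ≤ key a y) : a y ≤ a x := by
  rcases eq_or_lt_of_le h with heq | hlt
  · have hxy : x = y := by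
      have := congrArg (fun p => (ofLex p).2) heq
      exact Fin.val_injective this
    exact hxy ▸ le_refl _
  · rcases (key_lt_iff a).mp hlt with h1 | h2
    · exact h1.le
    · exact h2.1.ge

lemma key_sort_strictMono (a : Fin n → ℕ) :
    StrictMono (key a ∘ Tuple.sort (key a)) :=
  (Tuple.monotone_sort (key a)).strictMono_of_injective
    ((key_injective a).comp (Tuple.sort (key a)).injective)

lemma std_lt_iff (a : Fin n → ℕ) {x y : Fin n} :
    std a x < std a y ↔ a y < a x ∨ (a x = a y ∧ x < y) := by
  rw [← key_lt_iff a]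
  rw [← (key_sort_strictMono a).lt_iff_lt (a := std a x) (b := std a y)]
  simp [std, Function.comp]

lemma ofFn_perm_coe (a : Fin n → ℕ) (e : Equiv.Perm (Fin n)) :
    (↑(List.ofFn (a ∘ e)) : Multiset ℕ) = ↑(List.ofFn a) := by
  rw [List.ofFn_eq_map, List.ofFn_eq_map, ← Multiset.map_coe, ← Multiset.map_coe,
    ← Multiset.map_map]
  congr 1
  have h1 : ((List.finRange n : Multiset (Fin n)).map e) = (Finset.univ.map e.toEmbedding).val := by
    rw [Finset.map_val, Fin.univ_def]; rfl
  rw [h1, Finset.map_univ_equiv, Fin.univ_def]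

lemma dsortList_comp_perm (a : Fin n → ℕ) (e : Equiv.Perm (Fin n)) :
    dsortList (a ∘ e) = dsortList a := by
  unfold dsortList
  rw [ofFn_perm_coe]

lemma dsortList_eq_ofFn (a : Fin n → ℕ) :
    dsortList a = List.ofFn (a ∘ Tuple.sort (key a)) := by
  refine (fun hp h1 h2 => List.Perm.eq_of_pairwise' (r := (· ≥ ·)) h1 h2 hp) ?_ ?_ ?_
  · have h1 : List.Perm (dsortList a) (List.ofFn a) := by
      refine List.Perm.trans (List.reverse_perm _) ?_
      rw [← Multiset.coe_eq_coe, Multiset.sort_eq]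
    have h2 : List.Perm (List.ofFn a) (List.ofFn (a ∘ Tuple.sort (key a))) := by
      rw [← Multiset.coe_eq_coe, ofFn_perm_coe]
    exact h1.trans h2
  · rw [dsortList, List.pairwise_reverse]
    exact Multiset.pairwise_sort _ (· ≤ ·)
  · rw [List.pairwise_ofFn]
    intro x y hxy
    exact key_le_imp a (Tuple.monotone_sort (key a) hxy.le)

lemma dsort_apply (a : Fin n → ℕ) (x : Fin n) :
    dsort a x = a (Tuple.sort (key a) x) := by
  have hl : (dsortList a).length = n := by
    rw [dsortList_eq_ofFn]; simp
  have hx : (x : ℕ) < (dsortList a).length := by rw [hl]; exact x.2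
  rw [dsort, List.getD_eq_getElem _ _ hx]
  simp only [dsortList_eq_ofFn]
  simp [List.getElem_ofFn]

lemma dsort_antitone (a : Fin n → ℕ) {x y : Fin n} (h : x ≤ y) : dsort a y ≤ dsort a x := by
  rw [dsort_apply, dsort_apply]
  exact key_le_imp a ((Tuple.monotone_sort (key a)) h)

lemma std_sorter (a : Fin n → ℕ) (x : Fin n) : a x = dsort a (std a x) := by
  rw [dsort_apply, std, Equiv.Perm.inv_def, Equiv.apply_symm_apply]

lemma P_subset_Inv {a : Fin n → ℕ} {τ : Equiv.Perm (Fin n)}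
    (hτ : ∀ i, a i = dsort a (τ i)) : Pa a ⊆ Inv τ := by
  intro p hp
  simp only [Pa, Inv, Finset.mem_filter, Finset.mem_univ, true_and] at hp ⊢
  refine ⟨hp.1, ?_⟩
  by_contra hcon
  push_neg at hcon
  have := dsort_antitone a hcon
  rw [← hτ p.1, ← hτ p.2] at this
  exact absurd this (not_le.mpr hp.2)

lemma Inv_std (a : Fin n → ℕ) : Inv (std a) = Pa a := by
  ext p
  simp only [Inv, Pa, Finset.mem_filter, Finset.mem_univ, true_and, std_lt_iff]
  constructor
  · rintro ⟨h1, h2 | ⟨_, h3⟩⟩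
    · exact ⟨h1, h2⟩
    · exact absurd h1 (not_lt.mpr h3.le)
  · rintro ⟨h1, h2⟩
    exact ⟨h1, Or.inl h2⟩

lemma isMinSorter_std (a : Fin n → ℕ) : IsMinSorter a (std a) := by
  refine ⟨std_sorter a, fun τ hτ => ?_⟩
  rw [plen_eq, plen_eq, Inv_std]
  exact Finset.card_le_card (P_subset_Inv hτ)

lemma rank_eq (σ : Equiv.Perm (Fin n)) (x : Fin n) :
    (Finset.univ.filter fun k => σ k < σ x).card = (σ x : ℕ) := by
  rw [← Fin.card_Iio (σ x)]
  apply Finset.card_bij (fun k _ => σ k)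
  · intro k hk; simp only [Finset.mem_filter] at hk; simpa using hk.2
  · intro k _ k' _ h; exact σ.injective h
  · intro m hm
    refine ⟨σ⁻¹ m, ?_, by simp⟩
    simp only [Finset.mem_filter, Finset.mem_univ, true_and, Equiv.Perm.inv_def, Equiv.apply_symm_apply]
    simpa using hm

lemma perm_eq_of_Inv_eq {σ τ : Equiv.Perm (Fin n)} (h : Inv σ = Inv τ) : σ = τ := by
  have hfil : ∀ x, (Finset.univ.filter fun k => σ k < σ x) =
      (Finset.univ.filter fun k => τ k < τ x) := by
    intro x
    ext k
    simp only [Finset.mem_filter, Finset.mem_univ, true_and]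
    rcases lt_trichotomy k x with hkx | hkx | hkx
    · have hm : ((k, x) ∈ Inv σ) ↔ ((k, x) ∈ Inv τ) := by rw [h]
      simp only [Inv, Finset.mem_filter, Finset.mem_univ, true_and, hkx, true_and] at hm
      have hσ : σ k ≠ σ x := fun hh => hkx.ne (σ.injective hh)
      have hτ : τ k ≠ τ x := fun hh => hkx.ne (τ.injective hh)
      constructor
      · intro hlt
        exact lt_of_le_of_ne (not_lt.mp (fun hc => absurd (hm.mpr hc) (not_lt.mpr hlt.le))) hτ
      · intro hlt
        exact lt_of_le_of_ne (not_lt.mp (fun hc => absurd (hm.mp hc) (not_lt.mpr hlt.le))) hσ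
    · subst hkx; simp
    · have hm : ((x, k) ∈ Inv σ) ↔ ((x, k) ∈ Inv τ) := by rw [h]
      simp only [Inv, Finset.mem_filter, Finset.mem_univ, true_and, hkx, true_and] at hm
      exact hm
  apply Equiv.ext
  intro x
  have := (rank_eq σ x).symm.trans ((congrArg Finset.card (hfil x)).trans (rank_eq τ x))
  exact Fin.val_injective this

lemma minSorter_eq_std {a : Fin n → ℕ} {w : Equiv.Perm (Fin n)} (hw : IsMinSorter a w) :
    w = std a := by
  have h1 : Pa a ⊆ Inv w := P_subset_Inv hw.1
  have h2 : (Inv w).card ≤ (Pa a).card := by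
    rw [← plen_eq, ← Inv_std, ← plen_eq]
    exact hw.2 (std a) (std_sorter a)
  have h3 : Pa a = Inv w := Finset.eq_of_subset_of_card_le h1 h2
  exact perm_eq_of_Inv_eq (h3 ▸ Inv_std a).symm ▸ rfl

lemma swap_lt_cases {i j x y : Fin n} (hij : i < j) (hxy : x < y)
    (h : Equiv.swap i j y < Equiv.swap i j x) :
    (x = i ∧ y = j) ∨ (x = i ∧ y < j ∧ y ≠ i ∧ y ≠ j) ∨ (y = j ∧ i < x ∧ x ≠ i ∧ x ≠ j) := by
  by_cases hxi : x = i
  · by_cases hyj : y = j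
    · exact Or.inl ⟨hxi, hyj⟩
    · have hyi : y ≠ i := fun hh => absurd (hh ▸ hxy) (by simp [hxi])
      rw [hxi, Equiv.swap_apply_left, Equiv.swap_apply_of_ne_of_ne hyi hyj] at h
      exact Or.inr (Or.inl ⟨hxi, h, hyi, hyj⟩)
  · by_cases hxj : x = j
    · have hyj : y ≠ j := fun hh => absurd (hh ▸ hxy) (by simp [hxj])
      have hyi : y ≠ i := fun hh => absurd (hxj ▸ hh ▸ hxy) (not_lt.mpr hij.le)
      rw [hxj, Equiv.swap_apply_right, Equiv.swap_apply_of_ne_of_ne hyi hyj] at h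
      exact absurd (h.trans (hij.trans (hxj ▸ hxy))) (lt_irrefl _)
    · by_cases hyi : y = i
      · have hlt : x < i := hyi ▸ hxy
        rw [hyi, Equiv.swap_apply_left, Equiv.swap_apply_of_ne_of_ne hxi hxj] at h
        exact absurd (h.trans (hlt.trans hij)) (lt_irrefl _)
      · by_cases hyj : y = j
        · rw [hyj, Equiv.swap_apply_right, Equiv.swap_apply_of_ne_of_ne hxi hxj] at h
          exact Or.inr (Or.inr ⟨hyj, h, hxi, hxj⟩)
        · rw [Equiv.swap_apply_of_ne_of_ne hxi hxj, Equiv.swap_apply_of_ne_of_ne hyi hyj] at h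
          exact absurd (h.trans hxy) (lt_irrefl _)

lemma plen_lt_of_lt (v : Equiv.Perm (Fin n)) {i j : Fin n} (hij : i < j) (h : v i < v j) :
    (Inv v).card < (Inv (v * Equiv.swap i j)).card := by
  set s := Equiv.swap i j with hs
  have hswap : ∀ x : Fin n, s (s x) = x := fun x => Equiv.swap_apply_self i j x
  have hsl : s i = j := Equiv.swap_apply_left i j
  have hsr : s j = i := Equiv.swap_apply_right i j
  have hsnn : ∀ x : Fin n, x ≠ i → x ≠ j → s x = x := fun x h1 h2 =>
    Equiv.swap_apply_of_ne_of_ne h1 h2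
  have hmul : ∀ x : Fin n, (v * s) x = v (s x) := fun x => rfl
  set g : Fin n × Fin n → Fin n × Fin n := fun p => if s p.1 < s p.2 then (s p.1, s p.2) else p
    with hg
  have hgdef : ∀ p : Fin n × Fin n, g p = if s p.1 < s p.2 then (s p.1, s p.2) else p :=
    fun p => rfl
  have hmemInv : ∀ (u : Equiv.Perm (Fin n)) (p : Fin n × Fin n),
      p ∈ Inv u ↔ p.1 < p.2 ∧ u p.2 < u p.1 := by
    intro u p; simp [Inv]
  have hgg : ∀ p : Fin n × Fin n, p.1 < p.2 → g (g p) = p := by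
    intro p hp
    by_cases h1 : s p.1 < s p.2
    · rw [hgdef p, if_pos h1, hgdef, if_pos (show s (s p.1) < s (s p.2) by
        rw [hswap, hswap]; exact hp), hswap, hswap]
    · rw [hgdef p, if_neg h1, hgdef p, if_neg h1]
  have himg : (Inv v).image g ⊆ Inv (v * s) := by
    intro q hq
    obtain ⟨p, hp, rfl⟩ := Finset.mem_image.mp hq
    rw [hmemInv] at hp
    obtain ⟨hp1, hp2⟩ := hp
    by_cases h1 : s p.1 < s p.2
    · rw [hgdef p, if_pos h1, hmemInv]
      refine ⟨h1, ?_⟩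
      rw [hmul, hmul, hswap, hswap]
      exact hp2
    · rw [hgdef p, if_neg h1, hmemInv]
      refine ⟨hp1, ?_⟩
      have hne : s p.2 ≠ s p.1 := fun hh => hp1.ne (s.injective hh.symm)
      have h2 : s p.2 < s p.1 := lt_of_le_of_ne (not_lt.mp h1) hne
      rw [hmul, hmul]
      rcases swap_lt_cases hij hp1 h2 with ⟨e1, e2⟩ | ⟨e1, e2, e3, e4⟩ | ⟨e1, e2, e3, e4⟩
      · exact absurd (e1 ▸ e2 ▸ hp2) (not_lt.mpr h.le)
      · rw [e1, hsl, hsnn p.2 e3 e4]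
        exact hp2.trans (show v p.1 < v j by rw [e1]; exact h)
      · have hx2 : p.1 ≠ j := e4
        rw [e1, hsr, hsnn p.1 e3 hx2]
        exact (show v i < v p.2 by rw [e1]; exact h).trans hp2
  have hinj : Set.InjOn g (Inv v) := by
    intro p hp q hq hpq
    have hp1 : p.1 < p.2 := ((hmemInv v p).mp (Finset.mem_coe.mp hp)).1
    have hq1 : q.1 < q.2 := ((hmemInv v q).mp (Finset.mem_coe.mp hq)).1
    rw [← hgg p hp1, ← hgg q hq1, hpq]
  have hmem : (i, j) ∈ Inv (v * s) := by
    rw [hmemInv]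
    refine ⟨hij, ?_⟩
    show v (s j) < v (s i)
    rw [hsl, hsr]
    exact h
  have hnot : (i, j) ∉ (Inv v).image g := by
    intro hcon
    obtain ⟨p, hp, hgp⟩ := Finset.mem_image.mp hcon
    rw [hmemInv] at hp
    by_cases h1 : s p.1 < s p.2
    · rw [hgdef p, if_pos h1] at hgp
      have e1 : s p.1 = i := congrArg Prod.fst hgp
      have e2 : s p.2 = j := congrArg Prod.snd hgp
      have e1' : p.1 = j := by rw [← hswap p.1, e1, hsl]
      have e2' : p.2 = i := by rw [← hswap p.2, e2, hsr]
      have : j < i := by rw [← e1', ← e2']; exact hp.1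
      exact absurd (this.trans hij) (lt_irrefl _)
    · rw [hgdef p, if_neg h1] at hgp
      rw [hgp] at hp
      exact absurd (h.trans hp.2) (lt_irrefl _)
  calc (Inv v).card = ((Inv v).image g).card := (Finset.card_image_of_injOn hinj).symm
    _ < (Inv (v * s)).card :=
        Finset.card_lt_card ⟨himg, fun hsub => hnot (hsub hmem)⟩

lemma plen_lt_of_gt (v : Equiv.Perm (Fin n)) {i j : Fin n} (hij : i < j) (h : v j < v i) :
    (Inv (v * Equiv.swap i j)).card < (Inv v).card := by
  have h2 := plen_lt_of_lt (v * Equiv.swap i j) hij (by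
    simp only [Equiv.Perm.mul_apply, Equiv.swap_apply_left, Equiv.swap_apply_right]
    exact h)
  rwa [mul_assoc, Equiv.swap_mul_self, mul_one] at h2

lemma good_swap (a : Fin n → ℕ) {i j : Fin n} (hij : i < j) (hlt : a i < a j)
    (hgood : ∀ k, i < k → k < j → a k < a i ∨ a j < a k) :
    IsMinSorter (a ∘ Equiv.swap i j) (std a * Equiv.swap i j) ∧
      BruhatStep (std a * Equiv.swap i j) (std a) := by
  set s := Equiv.swap i j with hs
  have hsl : s i = j := Equiv.swap_apply_left i j
  have hsr : s j = i := Equiv.swap_apply_right i j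
  have hsnn : ∀ x : Fin n, x ≠ i → x ≠ j → s x = x := fun x h1 h2 =>
    Equiv.swap_apply_of_ne_of_ne h1 h2
  set b := a ∘ s with hb
  have hbx : ∀ x, b x = a (s x) := fun x => rfl
  have hdsb : dsort b = dsort a := by
    funext x
    show (dsortList b).getD x.1 0 = (dsortList a).getD x.1 0
    rw [hb, dsortList_comp_perm]
  -- sorter
  have hsorter : ∀ x, b x = dsort b ((std a * s) x) := by
    intro x
    rw [hdsb, hbx]
    exact std_sorter a (s x)
  -- Inv (std a * s) ⊆ Pa b
  have hsub : Inv (std a * s) ⊆ Pa b := by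
    intro p hp
    simp only [Inv, Pa, Finset.mem_filter, Finset.mem_univ, true_and] at hp ⊢
    obtain ⟨hp1, hp2⟩ := hp
    refine ⟨hp1, ?_⟩
    have hp2' : std a (s p.2) < std a (s p.1) := hp2
    rcases (std_lt_iff a).mp hp2' with h1 | ⟨h1, h2⟩
    · exact h1
    · exfalso
      rcases swap_lt_cases hij hp1 h2 with ⟨e1, e2⟩ | ⟨e1, e2, e3, e4⟩ | ⟨e1, e2, e3, e4⟩
      · rw [e1, e2, hsr, hsl] at h1
        exact absurd h1 hlt.ne
      · rw [e1, hsl, hsnn p.2 e3 e4] at h1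
        have := hgood p.2 (e1 ▸ hp1) e2
        omega
      · have hx2 : p.1 ≠ j := e4
        rw [e1, hsr, hsnn p.1 e3 hx2] at h1
        have := hgood p.1 e2 (e1 ▸ hp1)
        omega
  -- minimality
  have hmin : IsMinSorter b (std a * s) := by
    refine ⟨hsorter, fun τ hτ => ?_⟩
    calc plen (std a * s) = (Inv (std a * s)).card := rfl
      _ ≤ (Pa b).card := Finset.card_le_card hsub
      _ ≤ (Inv τ).card := Finset.card_le_card (P_subset_Inv hτ)
  refine ⟨hmin, ⟨i, j, hij.ne, ?_, ?_⟩⟩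
  · rw [← hs, mul_assoc, Equiv.swap_mul_self, mul_one]
  · show (Inv (std a * s)).card < (Inv (std a)).card
    refine plen_lt_of_gt (std a) hij ?_
    exact (std_lt_iff a).mpr (Or.inl hlt)

lemma swap_eq_self_of_eq {a : Fin n → ℕ} {i j : Fin n} (h : a i = a j) :
    a ∘ Equiv.swap i j = a := by
  funext x
  by_cases hxi : x = i
  · simp [hxi, Equiv.swap_apply_left, h.symm]
  · by_cases hxj : x = j
    · simp [hxj, Equiv.swap_apply_right, h]
    · simp [Function.comp, Equiv.swap_apply_of_ne_of_ne hxi hxj]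

lemma bruhat_step_all (d : ℕ) : ∀ (a : Fin n → ℕ) (i j : Fin n), i < j →
    (j : ℕ) - (i : ℕ) ≤ d → a i ≤ a j → Bruhat (std (a ∘ Equiv.swap i j)) (std a) := by
  induction d with
  | zero =>
    intro a i j hij hd _
    have : (i : ℕ) < (j : ℕ) := hij
    omega
  | succ d ih =>
    intro a i j hij hd hle
    rcases eq_or_lt_of_le hle with heq | hlt
    · rw [swap_eq_self_of_eq heq]
      exact Relation.ReflTransGen.refl
    · by_cases hex : ∃ k, i < k ∧ k < j ∧ a i ≤ a k ∧ a k ≤ a j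
      · obtain ⟨k, hik, hkj, h1, h2⟩ := hex
        have hki : k ≠ i := hik.ne'
        have hkj' : k ≠ j := hkj.ne
        have hij' : (i : ℕ) < (j : ℕ) := hij
        have hik' : (i : ℕ) < (k : ℕ) := hik
        have hkj'' : (k : ℕ) < (j : ℕ) := hkj
        set c := a ∘ Equiv.swap k j with hc
        have hc1 : c i = a i := by
          simp [hc, Function.comp, Equiv.swap_apply_of_ne_of_ne hik.ne hij.ne]
        have hc2 : c k = a j := by simp [hc]
        have hc3 : c j = a k := by simp [hc]
        set e := c ∘ Equiv.swap i k with he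
        have he1 : e k = c i := by simp [he]
        have he2 : e j = c j := by
          simp [he, Function.comp, Equiv.swap_apply_of_ne_of_ne hij.ne' hkj.ne']
        have step1 : Bruhat (std c) (std a) := ih a k j hkj (by omega) h2
        have step2 : Bruhat (std e) (std c) := ih c i k hik (by omega) (by rw [hc1, hc2]; exact hle)
        have step3 : Bruhat (std (e ∘ Equiv.swap k j)) (std e) :=
          ih e k j hkj (by omega) (by rw [he1, he2, hc1, hc3]; exact h1)
        have hfin : e ∘ Equiv.swap k j = a ∘ Equiv.swap i j := by
          have hperm : Equiv.swap k j * Equiv.swap i k * Equiv.swap k j = Equiv.swap i j := by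
            have := Equiv.swap_apply_apply (Equiv.swap k j) i k
            rw [Equiv.swap_apply_of_ne_of_ne hik.ne hij.ne, Equiv.swap_apply_left] at this
            rw [Equiv.swap_inv] at this
            exact this.symm
          funext x
          have hx := congrArg (fun (u : Equiv.Perm (Fin n)) => a (u x)) hperm
          simpa [he, hc, Function.comp, Equiv.Perm.mul_apply] using hx
        rw [hfin] at step3
        exact (step3.trans step2).trans step1
      · push_neg at hex
        have hgood : ∀ k, i < k → k < j → a k < a i ∨ a j < a k := by
          intro k h1 h2
          rcases le_or_gt (a i) (a k) with h3 | h3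
          · exact Or.inr (hex k h1 h2 h3)
          · exact Or.inl h3
        obtain ⟨hmin, hstep⟩ := good_swap a hij hlt hgood
        have heq : std a * Equiv.swap i j = std (a ∘ Equiv.swap i j) := minSorter_eq_std hmin
        rw [← heq]
        exact Relation.ReflTransGen.single hstep

lemma bruhat_down (a : Fin n → ℕ) {u v : Equiv.Perm (Fin n)} (h : BruhatStep u v) :
    LSwapStepF (fun x => dsort a (v x)) (fun x => dsort a (u x)) := by
  obtain ⟨i, j, hne, hveq, hplen⟩ := h
  have huv : u = v * Equiv.swap i j := by
    rw [hveq, mul_assoc, Equiv.swap_mul_self, mul_one]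
  have key : ∀ (i' j' : Fin n), i' < j' → u = v * Equiv.swap i' j' →
      LSwapStepF (fun x => dsort a (v x)) (fun x => dsort a (u x)) := by
    intro i' j' hij' huv'
    have hvne : v i' ≠ v j' := fun hh => hij'.ne (v.injective hh)
    have hvij : v j' < v i' := by
      by_contra hcon
      push_neg at hcon
      have hlt : v i' < v j' := lt_of_le_of_ne hcon hvne
      have hcard := plen_lt_of_lt v hij' hlt
      rw [← huv'] at hcard
      have : plen v < plen u := hcard
      omega
    refine ⟨i', j', hij', dsort_antitone a hvij.le, ?_⟩
    funext x
    rw [huv']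
    rfl
  rcases hne.lt_or_gt with hij | hij
  · exact key i j hij huv
  · exact key j i hij (by rw [huv, Equiv.swap_comm])

end Stmt9

open Stmt9 in
theorem stmt9 {n : ℕ} (a : Fin n → ℕ) (w : Equiv.Perm (Fin n)) (hw : IsMinSorter a w) :
    {b | Relation.ReflTransGen LSwapStepF a b} =
      {b : Fin n → ℕ | dsortList b = dsortList a ∧
        ∃ wb : Equiv.Perm (Fin n), IsMinSorter b wb ∧ Bruhat wb w} := by
  ext b
  simp only [Set.mem_setOf_eq]
  constructor
  · intro hreach
    induction hreach with
    | refl => exact ⟨rfl, w, hw, Relation.ReflTransGen.refl⟩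
    | @tail c b' hac hcb ih =>
      obtain ⟨hds, wc, hwc, hbr⟩ := ih
      obtain ⟨i, j, hij, hle, rfl⟩ := hcb
      refine ⟨?_, std (c ∘ Equiv.swap i j), isMinSorter_std _, ?_⟩
      · rw [dsortList_comp_perm]
        exact hds
      · have h1 : Bruhat (std (c ∘ Equiv.swap i j)) (std c) :=
          bruhat_step_all (j : ℕ) c i j hij (by omega) hle
        have h2 : wc = std c := minSorter_eq_std hwc
        exact h1.trans (h2 ▸ hbr)
  · rintro ⟨hds, wb, hwb, hbr⟩
    have hdsort : dsort b = dsort a := by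
      funext x
      show (dsortList b).getD _ 0 = (dsortList a).getD _ 0
      rw [hds]
    have hbeq : b = fun x => dsort a (wb x) := funext fun x => by rw [hwb.1 x, hdsort]
    have main : ∀ u : Equiv.Perm (Fin n), Bruhat u w →
        Relation.ReflTransGen LSwapStepF a (fun x => dsort a (u x)) := by
      intro u hu
      induction hu using Relation.ReflTransGen.head_induction_on with
      | refl =>
        have hwa : (fun x => dsort a (w x)) = a := funext fun x => (hw.1 x).symm
        rw [hwa]
      | head hstep hrest ih =>
        exact ih.tail (bruhat_down a hstep)
    rw [hbeq]
    exact main wb hbr
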